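/- Let G be a connected Δ-regular bipartite graph with parts of size n and second eigenvalue at most λ, let q ≥ 2, δ ∈ (0,1), and let H be a symmetric q×q δ-matrix. Let ε ∈ (0,1) satisfy ε ≥ 2qλ/Δ and ε² ≥ 8q²log(q)/(Δ log(1/δ)). Then Z_{G,H} − Z_{G,H,ε} ≤ q^{−2n}, and hence Z_{G,H,ε} is an e^{−n}-approximation to Z_{G,H}. -/

import Mathlib

open Finset Matrix
open scoped Classical RealInnerProductSpace

def IsDeltaMatrix {q : ℕ} (δ : ℝ) (H : Matrix (Fin q) (Fin q) ℝ) : Prop :=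
  (∀ i j, 0 ≤ H i j) ∧ (∃ i j, H i j = 1) ∧ (∀ i j, H i j = 1 ∨ H i j ≤ δ)

def IsBiclique {q : ℕ} (H : Matrix (Fin q) (Fin q) ℝ) (B0 B1 : Finset (Fin q)) : Prop :=
  ∀ i ∈ B0, ∀ j ∈ B1, H i j = 1

def IsMaxBiclique {q : ℕ} (H : Matrix (Fin q) (Fin q) ℝ) (B0 B1 : Finset (Fin q)) : Prop :=
  IsBiclique H B0 B1 ∧
    ∀ C0 C1, IsBiclique H C0 C1 → B0 ⊆ C0 → B1 ⊆ C1 → C0 = B0 ∧ C1 = B1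

/-- Weight of a spin configuration on a bipartite graph (each edge counted once). -/
def bipWeight {n q : ℕ} (G : SimpleGraph (Fin n ⊕ Fin n)) [DecidableRel G.Adj]
    (H : Matrix (Fin q) (Fin q) ℝ) (σ : Fin n ⊕ Fin n → Fin q) : ℝ :=
  ∏ u : Fin n, ∏ v : Fin n,
    if G.Adj (Sum.inl u) (Sum.inr v) then H (σ (Sum.inl u)) (σ (Sum.inr v)) else 1

/-- `σ` is within `ε` of the maximal biclique `(B₀,B₁)`:
all but an `ε`-fraction of the vertices get ground-state spins. -/
def NearBiclique {n q : ℕ} (ε : ℝ) (B0 B1 : Finset (Fin q))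
    (σ : Fin n ⊕ Fin n → Fin q) : Prop :=
  (1 - ε) * (2 * n) ≤
    ((Finset.univ.filter (fun u : Fin n => σ (Sum.inl u) ∈ B0)).card : ℝ) +
      ((Finset.univ.filter (fun u : Fin n => σ (Sum.inr u) ∈ B1)).card : ℝ)


/-- Perron–Frobenius for connected regular graphs: any eigenvector of the adjacency
matrix with eigenvalue equal to the degree is constant. -/
lemma pf_const {V : Type*} [Fintype V] [Nonempty V] (G : SimpleGraph V) [DecidableRel G.Adj]
    (hconn : G.Connected) (Δ : ℕ) (hreg : ∀ v, G.degree v = Δ)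
    (v : V → ℝ) (hv : G.adjMatrix ℝ *ᵥ v = (Δ : ℝ) • v) : ∃ c, v = fun _ => c := by
  obtain ⟨u0, -, hu0⟩ := Finset.exists_max_image Finset.univ v ⟨Classical.arbitrary V, mem_univ _⟩
  set M := v u0 with hM
  have hle : ∀ u, v u ≤ M := fun u => hu0 u (mem_univ u)
  have step : ∀ u, v u = M → ∀ w ∈ G.neighborFinset u, v w = M := by
    intro u hu w hw
    by_contra hne
    have hlt : v w < M := lt_of_le_of_ne (hle w) hne
    have hsum : (G.adjMatrix ℝ *ᵥ v) u = ∑ x ∈ G.neighborFinset u, v x := by simp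
    have hlt2 : ∑ x ∈ G.neighborFinset u, v x < ∑ x ∈ G.neighborFinset u, M :=
      Finset.sum_lt_sum (fun x _ => hle x) ⟨w, hw, hlt⟩
    have hcard : ∑ x ∈ G.neighborFinset u, (M : ℝ) = (Δ : ℝ) * M := by
      rw [Finset.sum_const, SimpleGraph.card_neighborFinset_eq_degree, hreg, nsmul_eq_mul]
    have : (Δ : ℝ) * v u = ∑ x ∈ G.neighborFinset u, v x := by
      rw [← hsum, hv]; simp
    rw [hu] at this
    linarith [this, hlt2, hcard]
  have haux : ∀ x y, ∀ _ : G.Walk x y, v x = M → v y = M := by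
    intro x y p
    induction p with
    | nil => exact fun h => h
    | @cons a b c h p ih =>
        exact fun hx => ih (step a hx b ((G.mem_neighborFinset a b).mpr h))
  have hall : ∀ u, v u = M := by
    intro u
    obtain ⟨p⟩ := (hconn u0 u)
    exact haux u0 u p rfl
  exact ⟨M, funext hall⟩

/-- Eigenvector expansion bound: for vectors orthogonal to the two trivial
eigenvectors of a connected regular bipartite graph, the quadratic form is ≤ λ. -/
lemma spectral_bound (n Δ : ℕ) (lam : ℝ) (hlam0 : 0 ≤ lam)
    (G : SimpleGraph (Fin n ⊕ Fin n)) [DecidableRel G.Adj]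
    (hn : 0 < n) (hconn : G.Connected)
    (hbip : ∀ a b : Fin n, ¬ G.Adj (Sum.inl a) (Sum.inl b) ∧ ¬ G.Adj (Sum.inr a) (Sum.inr b))
    (hreg : ∀ v, G.degree v = Δ)
    (hspec : ∀ μ ∈ spectrum ℝ (G.adjMatrix ℝ), μ ≠ (Δ : ℝ) → μ ≠ -(Δ : ℝ) → |μ| ≤ lam)
    (z z' : (Fin n ⊕ Fin n) → ℝ)
    (hz0 : ∑ a, z (Sum.inl a) = 0) (hz1 : ∑ a, z (Sum.inr a) = 0)
    (hz'0 : ∑ a, z' (Sum.inl a) = 0) (hz'1 : ∑ a, z' (Sum.inr a) = 0) :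
    |∑ u, ∑ w, (G.adjMatrix ℝ) u w * z u * z' w| ≤
      lam * Real.sqrt (∑ u, z u ^ 2) * Real.sqrt (∑ u, z' u ^ 2) := by
  classical
  set A := G.adjMatrix ℝ with hAdef
  have hA : A.IsHermitian := by
    ext i j
    simp [hAdef, Matrix.conjTranspose_apply, SimpleGraph.adjMatrix_apply, SimpleGraph.adj_comm]
  set b := hA.eigenvectorBasis with hbdef
  set μ := hA.eigenvalues with hμdef
  have hmul : ∀ i, A *ᵥ ⇑(b i) = μ i • ⇑(b i) := fun i => hA.mulVec_eigenvectorBasis i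
  -- the two trivial eigenvector facts
  have hNonempty : Nonempty (Fin n ⊕ Fin n) := ⟨Sum.inl ⟨0, hn⟩⟩
  -- eigenvectors with eigenvalue Δ are constant
  have hPF : ∀ v : Fin n ⊕ Fin n → ℝ, A *ᵥ v = (Δ : ℝ) • v → ∃ c, v = fun _ => c :=
    fun v hv => pf_const G hconn Δ hreg v hv
  -- eigenvectors with eigenvalue -Δ are ±constant on the parts
  have hPF' : ∀ v : Fin n ⊕ Fin n → ℝ, A *ᵥ v = -(Δ : ℝ) • v →
      ∃ c, v = Sum.elim (fun _ => c) (fun _ => -c) := by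
    intro v hv
    set v' : Fin n ⊕ Fin n → ℝ := Sum.elim (fun a => v (Sum.inl a)) (fun a => -(v (Sum.inr a))) with hv'def
    have hv1 : A *ᵥ v' = (Δ : ℝ) • v' := by
      funext u
      have hrow : ∀ u : Fin n ⊕ Fin n, (A *ᵥ v') u = ∑ w ∈ G.neighborFinset u, v' w := by
        intro u; simp [hAdef]
      have hrow2 : ∀ u : Fin n ⊕ Fin n, (A *ᵥ v) u = ∑ w ∈ G.neighborFinset u, v w := by
        intro u; simp [hAdef]
      cases u with
      | inl a =>
          have hnb : ∀ w ∈ G.neighborFinset (Sum.inl a), ∃ x, w = Sum.inr x := by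
            intro w hw
            cases w with
            | inl x => exact absurd (G.mem_neighborFinset _ _ |>.1 hw) (hbip a x).1
            | inr x => exact ⟨x, rfl⟩
          have : ∑ w ∈ G.neighborFinset (Sum.inl a), v' w
              = -∑ w ∈ G.neighborFinset (Sum.inl a), v w := by
            rw [← Finset.sum_neg_distrib]
            apply Finset.sum_congr rfl
            intro w hw
            obtain ⟨x, rfl⟩ := hnb w hw
            simp [hv'def]
          have h2 := congrFun hv (Sum.inl a)
          rw [hrow2] at h2
          rw [hrow, this, h2]
          simp [hv'def]
          all_goals ring
      | inr a =>
          have hnb : ∀ w ∈ G.neighborFinset (Sum.inr a), ∃ x, w = Sum.inl x := by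
            intro w hw
            cases w with
            | inr x => exact absurd (G.mem_neighborFinset _ _ |>.1 hw) (hbip a x).2
            | inl x => exact ⟨x, rfl⟩
          have : ∑ w ∈ G.neighborFinset (Sum.inr a), v' w
              = ∑ w ∈ G.neighborFinset (Sum.inr a), v w := by
            apply Finset.sum_congr rfl
            intro w hw
            obtain ⟨x, rfl⟩ := hnb w hw
            simp [hv'def]
          have h2 := congrFun hv (Sum.inr a)
          rw [hrow2] at h2
          rw [hrow, this, h2]
          simp [hv'def]
          all_goals ring
    obtain ⟨c, hc⟩ := hPF v' hv1
    refine ⟨c, funext fun u => ?_⟩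
    cases u with
    | inl a => have := congrFun hc (Sum.inl a); simpa [hv'def] using this
    | inr a =>
        have := congrFun hc (Sum.inr a)
        simp [hv'def] at this
        simp [← this]
  -- move to Euclidean space
  set T := Matrix.toEuclideanLin A with hTdef
  have hTsym : T.IsSymmetric := by rw [hTdef]; exact Matrix.isHermitian_iff_isSymmetric.1 hA
  let ζ : EuclideanSpace ℝ (Fin n ⊕ Fin n) := WithLp.toLp 2 z
  let ζ2 : EuclideanSpace ℝ (Fin n ⊕ Fin n) := WithLp.toLp 2 z'
  set c : (Fin n ⊕ Fin n) → ℝ := fun i => (inner ℝ ζ (b i) : ℝ) with hcdef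
  set d : (Fin n ⊕ Fin n) → ℝ := fun i => (inner ℝ (b i) ζ2 : ℝ) with hddef
  have hL : (∑ u, ∑ w, A u w * z u * z' w) = (inner ℝ ζ (T ζ2) : ℝ) := by
    simp only [PiLp.inner_apply, RCLike.inner_apply, conj_trivial,
      Matrix.toEuclideanLin_apply, WithLp.ofLp_toLp,
      Matrix.mulVec, dotProduct, Finset.mul_sum, ζ, ζ2, hTdef]
    apply Finset.sum_congr rfl; intro u _; rw [Finset.sum_mul]; apply Finset.sum_congr rfl; intro w _; ring
  have hTb : ∀ i, T (b i) = μ i • b i := by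
    intro i
    rw [hTdef, Matrix.toEuclideanLin_apply]
    have h1 := hmul i
    rw [h1]
    rfl
  have hexp : (inner ℝ ζ (T ζ2) : ℝ) = ∑ i, c i * (μ i * d i) := by
    rw [← OrthonormalBasis.sum_inner_mul_inner b ζ (T ζ2)]
    apply Finset.sum_congr rfl; intro i _
    congr 1
    rw [← hTsym (b i) ζ2, hTb i, real_inner_smul_left]
  have hvanish : ∀ i, (μ i = (Δ : ℝ) ∨ μ i = -(Δ : ℝ)) → c i = 0 := by
    intro i hi
    have hci : c i = ∑ u, z u * (b i) u := by
      simp [hcdef, PiLp.inner_apply, RCLike.inner_apply, conj_trivial, ζ, mul_comm]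
    rcases hi with hi | hi
    · obtain ⟨c0, hc0⟩ := hPF (fun u => b i u) (by
        have := hmul i; rw [hi] at this; exact this)
      rw [hci]
      have hb : ∀ u, (b i) u = c0 := fun u => congrFun hc0 u
      simp only [hb, Fintype.sum_sum_type]
      rw [← Finset.sum_mul, ← Finset.sum_mul, hz0, hz1]
      ring
    · obtain ⟨c0, hc0⟩ := hPF' (fun u => b i u) (by
        have := hmul i; rw [hi] at this; exact this)
      rw [hci]
      have hbl : ∀ a : Fin n, (b i) (Sum.inl a) = c0 := fun a => congrFun hc0 (Sum.inl a)
      have hbr : ∀ a : Fin n, (b i) (Sum.inr a) = -c0 := fun a => congrFun hc0 (Sum.inr a)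
      simp only [Fintype.sum_sum_type, hbl, hbr]
      rw [show ∀ s : Finset (Fin n), ∑ a ∈ s, z (Sum.inr a) * (-c0) = (∑ a ∈ s, z (Sum.inr a)) * (-c0) from fun s => (Finset.sum_mul ..).symm]
      rw [← Finset.sum_mul, hz0, hz1]
      ring
  have hterm : ∀ i, |c i * (μ i * d i)| ≤ lam * (|c i| * |d i|) := by
    intro i
    by_cases hi : μ i = (Δ : ℝ) ∨ μ i = -(Δ : ℝ)
    · rw [hvanish i hi]
      simp
    · push_neg at hi
      have hμb : |μ i| ≤ lam :=
        hspec (μ i) (hA.eigenvalues_mem_spectrum_real i) hi.1 hi.2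
      rw [abs_mul, abs_mul]
      calc |c i| * (|μ i| * |d i|) = |μ i| * (|c i| * |d i|) := by ring
        _ ≤ lam * (|c i| * |d i|) := by
            apply mul_le_mul_of_nonneg_right hμb (by positivity)
  have hP1 : ∑ i, c i ^ 2 = ∑ u, z u ^ 2 := by
    have h := b.sum_inner_mul_inner ζ ζ
    have h2 : ∀ i, (inner ℝ ζ (b i) : ℝ) * (inner ℝ (b i) ζ : ℝ) = c i ^ 2 := by
      intro i
      simp only [hcdef, pow_two]
      rw [real_inner_comm (b i) ζ]
    rw [Finset.sum_congr rfl (fun i _ => h2 i)] at h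
    rw [h]
    simp only [PiLp.inner_apply]; simp [PiLp.inner_apply, RCLike.inner_apply, conj_trivial, ζ, pow_two]
  have hP2 : ∑ i, d i ^ 2 = ∑ u, z' u ^ 2 := by
    have h := b.sum_inner_mul_inner ζ2 ζ2
    have h2 : ∀ i, (inner ℝ ζ2 (b i) : ℝ) * (inner ℝ (b i) ζ2 : ℝ) = d i ^ 2 := by
      intro i
      simp only [hddef, pow_two]
      rw [real_inner_comm ζ2 (b i)]
    rw [Finset.sum_congr rfl (fun i _ => h2 i)] at h
    rw [h]
    simp only [PiLp.inner_apply]; simp [PiLp.inner_apply, RCLike.inner_apply, conj_trivial, ζ2, pow_two]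
  have hCS : ∑ i, |c i| * |d i| ≤ Real.sqrt (∑ u, z u ^ 2) * Real.sqrt (∑ u, z' u ^ 2) := by
    have h := Finset.sum_mul_sq_le_sq_mul_sq Finset.univ (fun i => |c i|) (fun i => |d i|)
    simp only [sq_abs] at h
    rw [hP1, hP2] at h
    have h0 : (0 : ℝ) ≤ ∑ i, |c i| * |d i| := Finset.sum_nonneg fun i _ => by positivity
    have h1 : (0 : ℝ) ≤ ∑ u, z u ^ 2 := Finset.sum_nonneg fun u _ => sq_nonneg _
    have h2 : (0 : ℝ) ≤ ∑ u, z' u ^ 2 := Finset.sum_nonneg fun u _ => sq_nonneg _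
    calc ∑ i, |c i| * |d i| = Real.sqrt ((∑ i, |c i| * |d i|) ^ 2) := (Real.sqrt_sq h0).symm
      _ ≤ Real.sqrt ((∑ u, z u ^ 2) * ∑ u, z' u ^ 2) := Real.sqrt_le_sqrt h
      _ = Real.sqrt (∑ u, z u ^ 2) * Real.sqrt (∑ u, z' u ^ 2) := Real.sqrt_mul h1 _
  calc |∑ u, ∑ w, A u w * z u * z' w| = |∑ i, c i * (μ i * d i)| := by rw [hL, hexp]
    _ ≤ ∑ i, |c i * (μ i * d i)| := Finset.abs_sum_le_sum_abs _ _
    _ ≤ ∑ i, lam * (|c i| * |d i|) := Finset.sum_le_sum fun i _ => hterm i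
    _ = lam * ∑ i, |c i| * |d i| := (Finset.mul_sum ..).symm
    _ ≤ lam * (Real.sqrt (∑ u, z u ^ 2) * Real.sqrt (∑ u, z' u ^ 2)) :=
        mul_le_mul_of_nonneg_left hCS hlam0
    _ = lam * Real.sqrt (∑ u, z u ^ 2) * Real.sqrt (∑ u, z' u ^ 2) := by ring
set_option maxHeartbeats 1000000 in
lemma mixing_bound (n Δ : ℕ) (lam : ℝ) (hlam0 : 0 ≤ lam)
    (G : SimpleGraph (Fin n ⊕ Fin n)) [DecidableRel G.Adj]
    (hn : 0 < n) (hconn : G.Connected)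
    (hbip : ∀ a b : Fin n, ¬ G.Adj (Sum.inl a) (Sum.inl b) ∧ ¬ G.Adj (Sum.inr a) (Sum.inr b))
    (hreg : ∀ v, G.degree v = Δ)
    (hspec : ∀ μ ∈ spectrum ℝ (G.adjMatrix ℝ), μ ≠ (Δ : ℝ) → μ ≠ -(Δ : ℝ) → |μ| ≤ lam)
    (S T : Finset (Fin n)) :
    (Δ : ℝ) * S.card * T.card / n - lam * Real.sqrt (S.card * T.card) ≤
      ∑ a ∈ S, ∑ b ∈ T, (if G.Adj (Sum.inl a) (Sum.inr b) then (1 : ℝ) else 0) := by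
  classical
  set A := G.adjMatrix ℝ with hAdef
  have hnR : (0 : ℝ) < n := by exact_mod_cast hn
  set s : ℝ := (S.card : ℝ) with hsdef
  set t : ℝ := (T.card : ℝ) with htdef
  have hs0 : (0 : ℝ) ≤ s := by rw [hsdef]; exact Nat.cast_nonneg _
  have ht0 : (0 : ℝ) ≤ t := by rw [htdef]; exact Nat.cast_nonneg _
  set x : Fin n → ℝ := fun a => if a ∈ S then 1 else 0 with hxdef
  set y : Fin n → ℝ := fun b => if b ∈ T then 1 else 0 with hydef
  have hxsum : ∑ a, x a = s := by simp [hxdef, hsdef]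
  have hysum : ∑ b, y b = t := by simp [hydef, htdef]
  have hxsq : ∀ a, x a ^ 2 = x a := by
    intro a; by_cases h : a ∈ S <;> simp [hxdef, h]
  have hysq : ∀ b, y b ^ 2 = y b := by
    intro b; by_cases h : b ∈ T <;> simp [hydef, h]
  set z : Fin n ⊕ Fin n → ℝ := Sum.elim (fun a => x a - s / n) (fun _ => 0) with hzdef
  set z' : Fin n ⊕ Fin n → ℝ := Sum.elim (fun _ => 0) (fun b => y b - t / n) with hz'def
  have hz0 : ∑ a, z (Sum.inl a) = 0 := by
    simp only [hzdef, Sum.elim_inl, Finset.sum_sub_distrib, hxsum, Finset.sum_const,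
      Finset.card_univ, Fintype.card_fin, nsmul_eq_mul]
    field_simp
    ring
  have hz1 : ∑ a, z (Sum.inr a) = 0 := by simp [hzdef]
  have hz'0 : ∑ a, z' (Sum.inl a) = 0 := by simp [hz'def]
  have hz'1 : ∑ a, z' (Sum.inr a) = 0 := by
    simp only [hz'def, Sum.elim_inr, Finset.sum_sub_distrib, hysum, Finset.sum_const,
      Finset.card_univ, Fintype.card_fin, nsmul_eq_mul]
    field_simp
    ring
  -- row and column sums of the bipartite adjacency block
  have hdeg : ∀ u : Fin n ⊕ Fin n, ∑ w, A u w = (Δ : ℝ) := by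
    intro u
    have h1 : ∑ w, A u w = ((Finset.univ.filter (fun w => G.Adj u w)).card : ℝ) := by
      rw [hAdef]
      simp [SimpleGraph.adjMatrix_apply, Finset.sum_boole]
    rw [h1, ← SimpleGraph.neighborFinset_eq_filter, SimpleGraph.card_neighborFinset_eq_degree,
      hreg]
  have hrow : ∀ a : Fin n, ∑ b, A (Sum.inl a) (Sum.inr b) = (Δ : ℝ) := by
    intro a
    have h0 : ∀ b : Fin n, A (Sum.inl a) (Sum.inl b) = 0 := by
      intro b; simp [hAdef, SimpleGraph.adjMatrix_apply, (hbip a b).1]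
    have := hdeg (Sum.inl a)
    rw [Fintype.sum_sum_type] at this
    simpa [h0] using this
  have hcol : ∀ b : Fin n, ∑ a, A (Sum.inl a) (Sum.inr b) = (Δ : ℝ) := by
    intro b
    have h0 : ∀ a : Fin n, A (Sum.inr b) (Sum.inr a) = 0 := by
      intro a; simp [hAdef, SimpleGraph.adjMatrix_apply, (hbip b a).2]
    have hsymA : ∀ u w, A u w = A w u := by
      intro u w; simp [hAdef, SimpleGraph.adjMatrix_apply, SimpleGraph.adj_comm]
    have := hdeg (Sum.inr b)
    rw [Fintype.sum_sum_type] at this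
    simp only [h0] at this
    calc ∑ a, A (Sum.inl a) (Sum.inr b) = ∑ a, A (Sum.inr b) (Sum.inl a) :=
          Finset.sum_congr rfl fun a _ => hsymA _ _
      _ = (Δ : ℝ) := by simpa using this
  -- the quadratic form
  set Q : ℝ := ∑ u, ∑ w, A u w * z u * z' w with hQdef
  set E : ℝ := ∑ a, ∑ b, A (Sum.inl a) (Sum.inr b) * x a * y b with hEdef
  have hQE : Q = E - (Δ : ℝ) * s * t / n := by
    have hblock : Q = ∑ a, ∑ b, A (Sum.inl a) (Sum.inr b) * z (Sum.inl a) * z' (Sum.inr b) := by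
      rw [hQdef, Fintype.sum_sum_type]
      have h1 : ∀ a : Fin n, ∑ w, A (Sum.inl a) w * z (Sum.inl a) * z' w
          = ∑ b, A (Sum.inl a) (Sum.inr b) * z (Sum.inl a) * z' (Sum.inr b) := by
        intro a
        rw [Fintype.sum_sum_type]
        simp [hz'def]
      have h2 : ∀ b : Fin n, ∑ w, A (Sum.inr b) w * z (Sum.inr b) * z' w = 0 := by
        intro b; simp [hzdef]
      rw [Finset.sum_congr rfl fun a _ => h1 a, Finset.sum_congr rfl fun b _ => h2 b]
      simp
    rw [hblock]
    have hexp : ∀ a b, A (Sum.inl a) (Sum.inr b) * z (Sum.inl a) * z' (Sum.inr b)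
        = A (Sum.inl a) (Sum.inr b) * x a * y b
          - (t / n) * (A (Sum.inl a) (Sum.inr b) * x a)
          - (s / n) * (A (Sum.inl a) (Sum.inr b) * y b)
          + (s / n) * (t / n) * A (Sum.inl a) (Sum.inr b) := by
      intro a b; simp only [hzdef, hz'def, Sum.elim_inl, Sum.elim_inr]; ring
    rw [Finset.sum_congr rfl fun a _ => Finset.sum_congr rfl fun b _ => hexp a b]
    have hsum1 : ∑ a, ∑ b, (t / n) * (A (Sum.inl a) (Sum.inr b) * x a) = (t / n) * ((Δ : ℝ) * s) := by
      have hinner : ∀ a : Fin n, ∑ b, (t / n) * (A (Sum.inl a) (Sum.inr b) * x a)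
          = (t / n) * ((Δ : ℝ) * x a) := by
        intro a
        rw [← Finset.mul_sum, ← Finset.sum_mul, hrow]
      rw [Finset.sum_congr rfl fun a _ => hinner a, ← Finset.mul_sum, ← Finset.mul_sum, hxsum]
    have hsum2 : ∑ a, ∑ b, (s / n) * (A (Sum.inl a) (Sum.inr b) * y b) = (s / n) * ((Δ : ℝ) * t) := by
      rw [Finset.sum_comm]
      have hinner : ∀ b : Fin n, ∑ a, (s / n) * (A (Sum.inl a) (Sum.inr b) * y b)
          = (s / n) * ((Δ : ℝ) * y b) := by
        intro b
        rw [← Finset.mul_sum, ← Finset.sum_mul, hcol]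
      rw [Finset.sum_congr rfl fun b _ => hinner b, ← Finset.mul_sum, ← Finset.mul_sum, hysum]
    have hsum3 : ∑ a, ∑ b, (s / n) * (t / n) * A (Sum.inl a) (Sum.inr b)
        = (s / n) * (t / n) * ((Δ : ℝ) * n) := by
      have hinner : ∀ a : Fin n, ∑ b, (s / n) * (t / n) * A (Sum.inl a) (Sum.inr b)
          = (s / n) * (t / n) * (Δ : ℝ) := by
        intro a
        rw [← Finset.mul_sum, hrow]
      rw [Finset.sum_congr rfl fun a _ => hinner a, Finset.sum_const, Finset.card_univ,
        Fintype.card_fin, nsmul_eq_mul]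
      ring
    simp only [Finset.sum_add_distrib, Finset.sum_sub_distrib, hsum1, hsum2, hsum3, ← hEdef]
    field_simp
    ring
  -- norms of z and z'
  have hznorm : ∑ u, z u ^ 2 ≤ s := by
    have hcalc : ∑ u, z u ^ 2 = ∑ a : Fin n, (x a - s / n) ^ 2 := by
      rw [Fintype.sum_sum_type]
      simp [hzdef]
    rw [hcalc]
    have hterm : ∀ a : Fin n, (x a - s / n) ^ 2 = x a - 2 * (s / n) * x a + (s / n) ^ 2 := by
      intro a
      have h := hxsq a
      nlinarith [h]
    rw [Finset.sum_congr rfl fun a _ => hterm a]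
    rw [Finset.sum_add_distrib, Finset.sum_sub_distrib, ← Finset.mul_sum, hxsum,
      Finset.sum_const, Finset.card_univ, Fintype.card_fin, nsmul_eq_mul]
    have h1 : (n : ℝ) * (s / n) ^ 2 = s ^ 2 / n := by field_simp
    have h2 : 2 * (s / n) * s = 2 * (s ^ 2 / n) := by field_simp
    have h3 : (0 : ℝ) ≤ s ^ 2 / n := by positivity
    rw [h1, h2]
    linarith
  have hz'norm : ∑ u, z' u ^ 2 ≤ t := by
    have hcalc : ∑ u, z' u ^ 2 = ∑ b : Fin n, (y b - t / n) ^ 2 := by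
      rw [Fintype.sum_sum_type]
      simp [hz'def]
    rw [hcalc]
    have hterm : ∀ b : Fin n, (y b - t / n) ^ 2 = y b - 2 * (t / n) * y b + (t / n) ^ 2 := by
      intro b
      have h := hysq b
      nlinarith [h]
    rw [Finset.sum_congr rfl fun b _ => hterm b]
    rw [Finset.sum_add_distrib, Finset.sum_sub_distrib, ← Finset.mul_sum, hysum,
      Finset.sum_const, Finset.card_univ, Fintype.card_fin, nsmul_eq_mul]
    have h1 : (n : ℝ) * (t / n) ^ 2 = t ^ 2 / n := by field_simp
    have h2 : 2 * (t / n) * t = 2 * (t ^ 2 / n) := by field_simp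
    have h3 : (0 : ℝ) ≤ t ^ 2 / n := by positivity
    rw [h1, h2]
    linarith
  -- apply the spectral bound
  have hQbound := spectral_bound n Δ lam hlam0 G hn hconn hbip hreg hspec z z' hz0 hz1 hz'0 hz'1
  have hsqz : Real.sqrt (∑ u, z u ^ 2) ≤ Real.sqrt s := Real.sqrt_le_sqrt hznorm
  have hsqz' : Real.sqrt (∑ u, z' u ^ 2) ≤ Real.sqrt t := Real.sqrt_le_sqrt hz'norm
  have hQb2 : |Q| ≤ lam * Real.sqrt (s * t) := by
    calc |Q| ≤ lam * Real.sqrt (∑ u, z u ^ 2) * Real.sqrt (∑ u, z' u ^ 2) := hQbound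
      _ ≤ lam * Real.sqrt s * Real.sqrt t := by
          apply mul_le_mul
          · exact mul_le_mul_of_nonneg_left hsqz hlam0
          · exact hsqz'
          · positivity
          · positivity
      _ = lam * Real.sqrt (s * t) := by rw [Real.sqrt_mul hs0]; ring
  -- identify the edge count with E
  have hEcount : (∑ a ∈ S, ∑ b ∈ T, (if G.Adj (Sum.inl a) (Sum.inr b) then (1 : ℝ) else 0)) = E := by
    calc (∑ a ∈ S, ∑ b ∈ T, (if G.Adj (Sum.inl a) (Sum.inr b) then (1 : ℝ) else 0))
        = ∑ a ∈ S, ∑ b ∈ T, A (Sum.inl a) (Sum.inr b) * x a * y b := by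
          apply Finset.sum_congr rfl; intro a ha
          apply Finset.sum_congr rfl; intro b hb
          simp [hAdef, SimpleGraph.adjMatrix_apply, hxdef, hydef, ha, hb]
      _ = ∑ a, ∑ b ∈ T, A (Sum.inl a) (Sum.inr b) * x a * y b := by
          apply Finset.sum_subset (Finset.subset_univ S)
          intro a _ ha
          apply Finset.sum_eq_zero
          intro b _
          simp [hxdef, ha]
      _ = ∑ a, ∑ b, A (Sum.inl a) (Sum.inr b) * x a * y b := by
          apply Finset.sum_congr rfl; intro a _
          apply Finset.sum_subset (Finset.subset_univ T)
          intro b _ hb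
          simp [hydef, hb]
      _ = E := hEdef.symm
  rw [hEcount]
  have hEQ : E = Q + (Δ : ℝ) * s * t / n := by rw [hQE]; ring
  rw [hEQ]
  have hQlow : -(lam * Real.sqrt (s * t)) ≤ Q := by linarith [neg_abs_le Q, hQb2]
  linarith [hQlow]

lemma extend_biclique {q : ℕ} (H : Matrix (Fin q) (Fin q) ℝ) (B0 B1 : Finset (Fin q))
    (h : IsBiclique H B0 B1) :
    ∃ C0 C1, IsMaxBiclique H C0 C1 ∧ B0 ⊆ C0 ∧ B1 ⊆ C1 := by
  classical
  set s : Finset (Finset (Fin q) × Finset (Fin q)) :=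
    Finset.univ.filter (fun p => IsBiclique H p.1 p.2 ∧ B0 ⊆ p.1 ∧ B1 ⊆ p.2) with hsdef
  have hne : s.Nonempty := ⟨(B0, B1), by simp [hsdef, h]⟩
  obtain ⟨p, hp, hpmax⟩ := Finset.exists_max_image s (fun p => p.1.card + p.2.card) hne
  simp only [hsdef, Finset.mem_filter, Finset.mem_univ, true_and] at hp
  refine ⟨p.1, p.2, ⟨hp.1, ?_⟩, hp.2.1, hp.2.2⟩
  intro C0 C1 hC hsub0 hsub1
  have hmem : (C0, C1) ∈ s := by
    simp only [hsdef, Finset.mem_filter, Finset.mem_univ, true_and]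
    exact ⟨hC, hp.2.1.trans hsub0, hp.2.2.trans hsub1⟩
  have hcard : C0.card + C1.card ≤ p.1.card + p.2.card := by simpa using hpmax (C0, C1) hmem
  have h0 : p.1.card ≤ C0.card := Finset.card_le_card hsub0
  have h1 : p.2.card ≤ C1.card := Finset.card_le_card hsub1
  constructor
  · exact (Finset.eq_of_subset_of_card_le hsub0 (by omega)).symm
  · exact (Finset.eq_of_subset_of_card_le hsub1 (by omega)).symm

set_option maxHeartbeats 4000000 in
/-- Lemma 3.2: the configurations close to maximal bicliques capture almost all of `Z`. -/
theorem stmt7 (n q Δ : ℕ) (lam δ ε : ℝ) (hn : 0 < n) (hq : 2 ≤ q) (hΔ : 3 ≤ Δ)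
    (hlam0 : 0 < lam) (hlamΔ : lam < Δ) (hδ0 : 0 < δ) (hδ1 : δ < 1)
    (hε0 : 0 < ε) (hε1 : ε < 1)
    (hε2 : 2 * q * lam / Δ ≤ ε)
    (hε3 : 8 * q ^ 2 * Real.log q / (Δ * Real.log (1 / δ)) ≤ ε ^ 2)
    (H : Matrix (Fin q) (Fin q) ℝ) (hsymm : H.IsSymm) (hH : IsDeltaMatrix δ H)
    (G : SimpleGraph (Fin n ⊕ Fin n)) [DecidableRel G.Adj]
    (hconn : G.Connected)
    (hbip : ∀ a b : Fin n, ¬ G.Adj (Sum.inl a) (Sum.inl b) ∧ ¬ G.Adj (Sum.inr a) (Sum.inr b))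
    (hreg : ∀ v, G.degree v = Δ)
    (hspec : ∀ μ ∈ spectrum ℝ (G.adjMatrix ℝ), μ ≠ (Δ : ℝ) → μ ≠ -(Δ : ℝ) → |μ| ≤ lam) :
    let Z : ℝ := ∑ σ : Fin n ⊕ Fin n → Fin q, bipWeight G H σ
    let Zε : ℝ := ∑ σ : Fin n ⊕ Fin n → Fin q,
      if ∃ B0 B1, IsMaxBiclique H B0 B1 ∧ NearBiclique ε B0 B1 σ then bipWeight G H σ else 0
    Z - Zε ≤ ((q : ℝ) ^ (2 * n))⁻¹ ∧
      (1 - Real.exp (-(n : ℝ))) * Z ≤ Zε ∧ Zε ≤ (1 + Real.exp (-(n : ℝ))) * Z := by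
  classical
  intro Z Zε
  have hnR : (0 : ℝ) < n := by exact_mod_cast hn
  have hqR : (0 : ℝ) < q := by positivity
  have hq2 : (2 : ℝ) ≤ q := by exact_mod_cast hq
  have hΔR : (0 : ℝ) < Δ := by positivity
  have hHle1 : ∀ i j, H i j ≤ 1 := by
    intro i j
    rcases hH.2.2 i j with h | h
    · exact le_of_eq h
    · exact h.trans (le_of_lt hδ1)
  have hw_nonneg : ∀ σ : Fin n ⊕ Fin n → Fin q, 0 ≤ bipWeight G H σ := by
    intro σ
    unfold bipWeight
    apply Finset.prod_nonneg; intro u _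
    apply Finset.prod_nonneg; intro v _
    split
    · exact hH.1 _ _
    · norm_num
  -- the far-configuration bound
  have hfar : ∀ σ : Fin n ⊕ Fin n → Fin q,
      ¬ (∃ B0 B1, IsMaxBiclique H B0 B1 ∧ NearBiclique ε B0 B1 σ) →
      bipWeight G H σ ≤ ((q : ℝ) ^ (4 * n))⁻¹ := by
    intro σ hσ
    set Ai : Fin q → Finset (Fin n) :=
      fun i => Finset.univ.filter (fun u => σ (Sum.inl u) = i) with hAidef
    set Bj : Fin q → Finset (Fin n) :=
      fun j => Finset.univ.filter (fun u => σ (Sum.inr u) = j) with hBjdef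
    set thr : ℝ := ε * n / q with hthrdef
    have hthr0 : 0 < thr := by positivity
    set B0 : Finset (Fin q) := Finset.univ.filter (fun i => thr ≤ ((Ai i).card : ℝ)) with hB0def
    set B1 : Finset (Fin q) := Finset.univ.filter (fun j => thr ≤ ((Bj j).card : ℝ)) with hB1def
    -- the partition sums
    have hsum0 : ∑ i, ((Ai i).card : ℝ) = n := by
      rw [← Nat.cast_sum]
      congr 1
      rw [show ∑ i, (Ai i).card = ∑ i, ((Finset.univ : Finset (Fin n)).filter
        (fun u => σ (Sum.inl u) = i)).card from rfl]
      rw [← Finset.card_eq_sum_card_fiberwise (fun u _ => Finset.mem_univ (σ (Sum.inl u)))]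
      simp
    have hsum1 : ∑ j, ((Bj j).card : ℝ) = n := by
      rw [← Nat.cast_sum]
      congr 1
      rw [show ∑ j, (Bj j).card = ∑ j, ((Finset.univ : Finset (Fin n)).filter
        (fun u => σ (Sum.inr u) = j)).card from rfl]
      rw [← Finset.card_eq_sum_card_fiberwise (fun u _ => Finset.mem_univ (σ (Sum.inr u)))]
      simp
    -- counts of near spins
    have hcount0 : ((Finset.univ.filter (fun u : Fin n => σ (Sum.inl u) ∈ B0)).card : ℝ)
        = ∑ i ∈ B0, ((Ai i).card : ℝ) := by
      rw [← Nat.cast_sum]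
      congr 1
      rw [Finset.card_eq_sum_card_fiberwise
        (s := Finset.univ.filter (fun u : Fin n => σ (Sum.inl u) ∈ B0)) (f := fun u => σ (Sum.inl u)) (t := B0) (fun u hu => (Finset.mem_filter.1 hu).2)]
      apply Finset.sum_congr rfl
      intro i hi
      congr 1
      ext u
      simp only [hAidef, Finset.mem_filter, Finset.mem_univ, true_and]
      constructor
      · rintro ⟨-, h⟩; exact h
      · intro h; exact ⟨h ▸ hi, h⟩
    have hcount1 : ((Finset.univ.filter (fun u : Fin n => σ (Sum.inr u) ∈ B1)).card : ℝ)
        = ∑ j ∈ B1, ((Bj j).card : ℝ) := by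
      rw [← Nat.cast_sum]
      congr 1
      rw [Finset.card_eq_sum_card_fiberwise
        (s := Finset.univ.filter (fun u : Fin n => σ (Sum.inr u) ∈ B1)) (f := fun u => σ (Sum.inr u)) (t := B1) (fun u hu => (Finset.mem_filter.1 hu).2)]
      apply Finset.sum_congr rfl
      intro j hj
      congr 1
      ext u
      simp only [hBjdef, Finset.mem_filter, Finset.mem_univ, true_and]
      constructor
      · rintro ⟨-, h⟩; exact h
      · intro h; exact ⟨h ▸ hj, h⟩
    have hout0 : ∑ i ∈ Finset.univ \ B0, ((Ai i).card : ℝ) ≤ ε * n := by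
      have hle : ∀ i ∈ Finset.univ \ B0, ((Ai i).card : ℝ) ≤ thr := by
        intro i hi
        rw [Finset.mem_sdiff] at hi
        have := hi.2
        simp only [hB0def, Finset.mem_filter, Finset.mem_univ, true_and, not_le] at this
        exact le_of_lt this
      calc ∑ i ∈ Finset.univ \ B0, ((Ai i).card : ℝ)
          ≤ ∑ _i ∈ Finset.univ \ B0, thr := Finset.sum_le_sum hle
        _ = ((Finset.univ \ B0).card : ℝ) * thr := by rw [Finset.sum_const, nsmul_eq_mul]
        _ ≤ (q : ℝ) * thr := by
            apply mul_le_mul_of_nonneg_right _ (le_of_lt hthr0)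
            exact_mod_cast (Finset.card_le_card (Finset.subset_univ _)).trans
              (le_of_eq (Finset.card_univ.trans (Fintype.card_fin q)))
        _ = ε * n := by rw [hthrdef]; field_simp
    have hout1 : ∑ j ∈ Finset.univ \ B1, ((Bj j).card : ℝ) ≤ ε * n := by
      have hle : ∀ j ∈ Finset.univ \ B1, ((Bj j).card : ℝ) ≤ thr := by
        intro j hj
        rw [Finset.mem_sdiff] at hj
        have := hj.2
        simp only [hB1def, Finset.mem_filter, Finset.mem_univ, true_and, not_le] at this
        exact le_of_lt this
      calc ∑ j ∈ Finset.univ \ B1, ((Bj j).card : ℝ)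
          ≤ ∑ _j ∈ Finset.univ \ B1, thr := Finset.sum_le_sum hle
        _ = ((Finset.univ \ B1).card : ℝ) * thr := by rw [Finset.sum_const, nsmul_eq_mul]
        _ ≤ (q : ℝ) * thr := by
            apply mul_le_mul_of_nonneg_right _ (le_of_lt hthr0)
            exact_mod_cast (Finset.card_le_card (Finset.subset_univ _)).trans
              (le_of_eq (Finset.card_univ.trans (Fintype.card_fin q)))
        _ = ε * n := by rw [hthrdef]; field_simp
    have hin0 : (n : ℝ) - ε * n ≤ ∑ i ∈ B0, ((Ai i).card : ℝ) := by
      have hsplit := Finset.sum_sdiff (Finset.subset_univ B0)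
        (f := fun i => ((Ai i).card : ℝ))
      rw [hsum0] at hsplit
      linarith [hout0, hsplit]
    have hin1 : (n : ℝ) - ε * n ≤ ∑ j ∈ B1, ((Bj j).card : ℝ) := by
      have hsplit := Finset.sum_sdiff (Finset.subset_univ B1)
        (f := fun j => ((Bj j).card : ℝ))
      rw [hsum1] at hsplit
      linarith [hout1, hsplit]
    have hnear : NearBiclique ε B0 B1 σ := by
      unfold NearBiclique
      rw [hcount0, hcount1]
      push_cast
      nlinarith [hin0, hin1]
    -- B0, B1 is not a biclique
    have hnotbic : ¬ IsBiclique H B0 B1 := by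
      intro hb
      obtain ⟨C0, C1, hmax, hsub0, hsub1⟩ := extend_biclique H B0 B1 hb
      apply hσ
      refine ⟨C0, C1, hmax, ?_⟩
      unfold NearBiclique at hnear ⊢
      have h0 : ((Finset.univ.filter (fun u : Fin n => σ (Sum.inl u) ∈ B0)).card : ℝ)
          ≤ ((Finset.univ.filter (fun u : Fin n => σ (Sum.inl u) ∈ C0)).card : ℝ) := by
        exact_mod_cast Finset.card_le_card
          (Finset.monotone_filter_right _ (fun u _ hu => hsub0 hu))
      have h1 : ((Finset.univ.filter (fun u : Fin n => σ (Sum.inr u) ∈ B1)).card : ℝ)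
          ≤ ((Finset.univ.filter (fun u : Fin n => σ (Sum.inr u) ∈ C1)).card : ℝ) := by
        exact_mod_cast Finset.card_le_card
          (Finset.monotone_filter_right _ (fun u _ hu => hsub1 hu))
      linarith
    -- extract a bad pair
    rw [IsBiclique] at hnotbic
    push_neg at hnotbic
    obtain ⟨i, hi, j, hj, hij⟩ := hnotbic
    have hijδ : H i j ≤ δ := (hH.2.2 i j).resolve_left hij
    have hsi : thr ≤ ((Ai i).card : ℝ) := by
      have := Finset.mem_filter.1 hi; exact this.2
    have htj : thr ≤ ((Bj j).card : ℝ) := by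
      have := Finset.mem_filter.1 hj; exact this.2
    -- count bad edges via mixing
    set P : Finset (Fin n × Fin n) :=
      (Ai i ×ˢ Bj j).filter (fun p => G.Adj (Sum.inl p.1) (Sum.inr p.2)) with hPdef
    have hmix := mixing_bound n Δ lam (le_of_lt hlam0) G hn hconn hbip hreg hspec (Ai i) (Bj j)
    have hEP : ∑ a ∈ Ai i, ∑ b ∈ Bj j, (if G.Adj (Sum.inl a) (Sum.inr b) then (1 : ℝ) else 0)
        = (P.card : ℝ) := by
      rw [hPdef, Finset.card_filter]
      push_cast
      rw [Finset.sum_product]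
    set s : ℝ := ((Ai i).card : ℝ) with hs
    set t : ℝ := ((Bj j).card : ℝ) with ht
    have hst : thr * thr ≤ s * t := by
      apply mul_le_mul hsi htj (le_of_lt hthr0) (hthr0.le.trans hsi)
    have hsqrt_le : Real.sqrt (s * t) ≤ s * t / thr := by
      have h1 : thr ≤ Real.sqrt (s * t) := by
        rw [show thr = Real.sqrt (thr * thr) from (Real.sqrt_mul_self hthr0.le).symm]
        exact Real.sqrt_le_sqrt hst
      have h2 : Real.sqrt (s * t) * Real.sqrt (s * t) = s * t := Real.mul_self_sqrt
        (mul_nonneg (hthr0.le.trans hsi) (hthr0.le.trans htj))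
      rw [le_div_iff₀ hthr0]
      calc Real.sqrt (s * t) * thr ≤ Real.sqrt (s * t) * Real.sqrt (s * t) :=
            mul_le_mul_of_nonneg_left h1 (Real.sqrt_nonneg _)
        _ = s * t := h2
    have hlamle : lam ≤ ε * Δ / (2 * q) := by
      rw [div_le_iff₀ hΔR] at hε2
      rw [le_div_iff₀ (by positivity)]
      linarith [hε2]
    have hPbound : (Δ : ℝ) * ε ^ 2 * n / (2 * q ^ 2) ≤ (P.card : ℝ) := by
      rw [hEP] at hmix
      have hlam_sqrt : lam * Real.sqrt (s * t) ≤ (Δ : ℝ) * s * t / (2 * n) := by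
        calc lam * Real.sqrt (s * t) ≤ (ε * Δ / (2 * q)) * (s * t / thr) := by
              apply mul_le_mul hlamle hsqrt_le (Real.sqrt_nonneg _)
              positivity
          _ = (Δ : ℝ) * s * t / (2 * n) := by
              rw [hthrdef]
              field_simp
      have hmain : (Δ : ℝ) * s * t / (2 * n) ≤ (P.card : ℝ) := by
        have : (Δ : ℝ) * s * t / n - (Δ : ℝ) * s * t / (2 * n) = (Δ : ℝ) * s * t / (2 * n) := by
          field_simp
          ring
        linarith [hmix, hlam_sqrt, this]
      calc (Δ : ℝ) * ε ^ 2 * n / (2 * q ^ 2) = (Δ : ℝ) * (thr * thr) / (2 * n) := by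
            rw [hthrdef]; field_simp
        _ ≤ (Δ : ℝ) * (s * t) / (2 * n) := by
            gcongr
        _ = (Δ : ℝ) * s * t / (2 * n) := by ring
        _ ≤ (P.card : ℝ) := hmain
    -- weight bound
    have hwP : bipWeight G H σ ≤ δ ^ P.card := by
      unfold bipWeight
      rw [← Finset.prod_product']
      have hbound : ∀ p ∈ (Finset.univ : Finset (Fin n)) ×ˢ (Finset.univ : Finset (Fin n)),
          (if G.Adj (Sum.inl p.1) (Sum.inr p.2) then H (σ (Sum.inl p.1)) (σ (Sum.inr p.2)) else 1)
          ≤ (if p ∈ P then δ else 1) := by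
        intro p _
        by_cases hpP : p ∈ P
        · simp only [hpP, if_true]
          rw [hPdef, Finset.mem_filter] at hpP
          obtain ⟨hpm, hadj⟩ := hpP
          rw [Finset.mem_product] at hpm
          have h1 : σ (Sum.inl p.1) = i := (Finset.mem_filter.1 hpm.1).2
          have h2 : σ (Sum.inr p.2) = j := (Finset.mem_filter.1 hpm.2).2
          rw [if_pos hadj, h1, h2]
          exact hijδ
        · simp only [hpP, if_false]
          split
          · exact hHle1 _ _
          · exact le_refl 1
      calc (∏ p ∈ Finset.univ ×ˢ Finset.univ,
            if G.Adj (Sum.inl p.1) (Sum.inr p.2) then H (σ (Sum.inl p.1)) (σ (Sum.inr p.2)) else 1)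
          ≤ ∏ p ∈ Finset.univ ×ˢ Finset.univ, (if p ∈ P then δ else 1) := by
            apply Finset.prod_le_prod _ hbound
            intro p _
            split
            · exact hH.1 _ _
            · norm_num
        _ = δ ^ P.card := by
            rw [Finset.prod_ite_mem]
            rw [Finset.prod_const]
            congr 1
            rw [Finset.univ_product_univ, Finset.univ_inter]
    -- numeric bound
    have hlog : 0 < Real.log (1 / δ) := Real.log_pos (by rw [one_div]; exact (one_lt_inv₀ hδ0).2 hδ1)
    have hlogq : 0 < Real.log q := Real.log_pos (by linarith)
    have h83 : 8 * (q : ℝ) ^ 2 * Real.log q ≤ ε ^ 2 * ((Δ : ℝ) * Real.log (1 / δ)) := by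
      rw [div_le_iff₀ (by positivity)] at hε3
      linarith
    have hkey : 4 * (n : ℝ) * Real.log q ≤ ((Δ : ℝ) * ε ^ 2 * n / (2 * q ^ 2)) * Real.log (1 / δ) := by
      have h1 : ((Δ : ℝ) * ε ^ 2 * n / (2 * q ^ 2)) * Real.log (1 / δ)
          = (n / (2 * q ^ 2)) * (ε ^ 2 * ((Δ : ℝ) * Real.log (1 / δ))) := by
        field_simp
      rw [h1]
      calc 4 * (n : ℝ) * Real.log q = (n / (2 * q ^ 2)) * (8 * q ^ 2 * Real.log q) := by
            field_simp; ring
        _ ≤ (n / (2 * q ^ 2)) * (ε ^ 2 * ((Δ : ℝ) * Real.log (1 / δ))) := by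
            apply mul_le_mul_of_nonneg_left h83 (by positivity)
    have hδpow : (δ : ℝ) ^ P.card ≤ ((q : ℝ) ^ (4 * n))⁻¹ := by
      have hc : ((Δ : ℝ) * ε ^ 2 * n / (2 * q ^ 2)) ≤ (P.card : ℝ) := hPbound
      have hlogδ : Real.log δ = -Real.log (1 / δ) := by
        rw [one_div, Real.log_inv]; ring
      have h1 : (P.card : ℝ) * Real.log δ ≤ -(4 * n * Real.log q) := by
        rw [hlogδ]
        have : (P.card : ℝ) * Real.log (1 / δ) ≥ ((Δ : ℝ) * ε ^ 2 * n / (2 * q ^ 2)) * Real.log (1 / δ) :=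
          mul_le_mul_of_nonneg_right hc hlog.le
        linarith [hkey, this]
      have h2 : (δ : ℝ) ^ P.card = Real.exp ((P.card : ℝ) * Real.log δ) := by
        rw [← Real.log_pow, Real.exp_log (by positivity)]
      have h3 : ((q : ℝ) ^ (4 * n))⁻¹ = Real.exp (-(4 * n * Real.log q)) := by
        rw [Real.exp_neg]
        congr 1
        rw [show 4 * (n : ℝ) * Real.log q = Real.log ((q : ℝ) ^ (4 * n)) by
          rw [Real.log_pow]; push_cast; ring]
        exact (Real.exp_log (by positivity)).symm
      rw [h2, h3]
      exact Real.exp_le_exp.2 h1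
    exact hwP.trans hδpow
  -- sum over configurations
  have hsplit : Z - Zε = ∑ σ : Fin n ⊕ Fin n → Fin q,
      (if ¬ (∃ B0 B1, IsMaxBiclique H B0 B1 ∧ NearBiclique ε B0 B1 σ)
        then bipWeight G H σ else 0) := by
    rw [show Z - Zε = ∑ σ : Fin n ⊕ Fin n → Fin q, (bipWeight G H σ -
      (if ∃ B0 B1, IsMaxBiclique H B0 B1 ∧ NearBiclique ε B0 B1 σ then bipWeight G H σ else 0))
      from by rw [← Finset.sum_sub_distrib]]
    apply Finset.sum_congr rfl
    intro σ _
    by_cases hP : ∃ B0 B1, IsMaxBiclique H B0 B1 ∧ NearBiclique ε B0 B1 σ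
    · simp [hP]
    · simp [hP]
  have hcardfun : (Fintype.card (Fin n ⊕ Fin n → Fin q) : ℝ) = (q : ℝ) ^ (2 * n) := by
    rw [Fintype.card_fun]
    push_cast
    rw [Fintype.card_sum, Fintype.card_fin, Fintype.card_fin]
    congr 1
    omega
  have hmain : Z - Zε ≤ ((q : ℝ) ^ (2 * n))⁻¹ := by
    rw [hsplit]
    calc (∑ σ : Fin n ⊕ Fin n → Fin q,
        (if ¬ (∃ B0 B1, IsMaxBiclique H B0 B1 ∧ NearBiclique ε B0 B1 σ)
          then bipWeight G H σ else 0))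
        ≤ ∑ _σ : Fin n ⊕ Fin n → Fin q, ((q : ℝ) ^ (4 * n))⁻¹ := by
          apply Finset.sum_le_sum
          intro σ _
          by_cases hP : ∃ B0 B1, IsMaxBiclique H B0 B1 ∧ NearBiclique ε B0 B1 σ
          · rw [if_neg (by simpa using hP)]
            positivity
          · rw [if_pos hP]
            exact hfar σ hP
      _ = (Fintype.card (Fin n ⊕ Fin n → Fin q) : ℝ) * ((q : ℝ) ^ (4 * n))⁻¹ := by
          rw [Finset.sum_const, nsmul_eq_mul, Finset.card_univ]
      _ = ((q : ℝ) ^ (2 * n))⁻¹ := by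
          rw [hcardfun]
          rw [show (4 : ℕ) * n = 2 * n + 2 * n from by omega, pow_add]
          field_simp
  refine ⟨hmain, ?_, ?_⟩
  · -- lower bound
    obtain ⟨i0, j0, hij0⟩ := hH.2.1
    have hZ1 : (1 : ℝ) ≤ Z := by
      have hσ0 : bipWeight G H (Sum.elim (fun _ => i0) (fun _ => j0)) = 1 := by
        unfold bipWeight
        apply Finset.prod_eq_one
        intro u _
        apply Finset.prod_eq_one
        intro v _
        simp [hij0]
      calc (1 : ℝ) = bipWeight G H (Sum.elim (fun _ => i0) (fun _ => j0)) := hσ0.symm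
        _ ≤ Z := Finset.single_le_sum (fun σ _ => hw_nonneg σ) (Finset.mem_univ _)
    have hqe : ((q : ℝ) ^ (2 * n))⁻¹ ≤ Real.exp (-(n : ℝ)) := by
      rw [Real.exp_neg]
      apply inv_anti₀ (Real.exp_pos _)
      calc Real.exp (n : ℝ) = Real.exp 1 ^ n := by
            rw [← Real.exp_one_rpow (n : ℝ), Real.rpow_natCast]
        _ ≤ 4 ^ n := by
            apply pow_le_pow_left₀ (Real.exp_pos 1).le
            linarith [Real.exp_one_lt_d9]
        _ ≤ (q : ℝ) ^ (2 * n) := by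
            rw [show (4 : ℝ) = 2 ^ 2 from by norm_num, ← pow_mul]
            apply pow_le_pow_left₀ (by norm_num) hq2
    have : Z - Zε ≤ Real.exp (-(n : ℝ)) * Z := by
      calc Z - Zε ≤ ((q : ℝ) ^ (2 * n))⁻¹ := hmain
        _ ≤ Real.exp (-(n : ℝ)) := hqe
        _ = Real.exp (-(n : ℝ)) * 1 := (mul_one _).symm
        _ ≤ Real.exp (-(n : ℝ)) * Z := by
            apply mul_le_mul_of_nonneg_left hZ1 (Real.exp_pos _).le
    linarith
  · -- upper bound
    have hZε_le : Zε ≤ Z := by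
      apply Finset.sum_le_sum
      intro σ _
      split
      · exact le_refl _
      · exact hw_nonneg σ
    have hZ0 : 0 ≤ Z := Finset.sum_nonneg fun σ _ => hw_nonneg σ
    nlinarith [Real.exp_pos (-(n : ℝ))]
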